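/- arXiv:2309.10372 — 2 statements merged into one kernel-verified Lean document; each statement's English description precedes it below -/
import Mathlib

section
/- Let D ⊆ ℝᵐ, let φ_ifc, φ₁⁻, …, φ_k⁻, φ₁⁺, …, φ_k⁺ : ℝᵐ → ℝ, and suppose the big-M constants satisfy: M_t⁺ ≥ φ_ifc(p) and M_t⁻ ≤ φ_ifc(p) for all p ∈ D; M_i⁻ ≤ φ_i⁻(p) for all p ∈ D with φ_ifc(p) ≥ 0; and M_i⁺ ≤ φ_i⁺(p) for all p ∈ D with φ_ifc(p) ≤ 0. Then for every p ∈ D such that either (φ_ifc(p) ≤ 0 and φ_i⁻(p) ≥ 0 for all i) or (φ_ifc(p) ≥ 0 and φ_i⁺(p) ≥ 0 for all i), there exists t ∈ {0,1} such that φ_ifc(p) ≤ M_t⁺·t, φ_ifc(p) ≥ M_t⁻·(1−t), φ_i⁻(p) ≥ M_i⁻·t for all i, and φ_i⁺(p) ≥ M_i⁺·(1−t) for all i. -/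
/-- Completeness of the MILP representation of a PwCA: with valid big-M
constants, every point of the PwCA feasible region admits a feasible binary
toggle `t ∈ {0,1}` satisfying constraints (7)–(10). -/
theorem pwca_milp_complete {m : ℕ} {ι : Type*}
    (D : Set (Fin m → ℝ))
    (φifc : (Fin m → ℝ) → ℝ) (φm φp : ι → (Fin m → ℝ) → ℝ)
    (Mtp Mtm : ℝ) (Mm Mp : ι → ℝ)
    (hMtp : ∀ p ∈ D, φifc p ≤ Mtp)
    (hMtm : ∀ p ∈ D, Mtm ≤ φifc p)
    (hMm : ∀ i : ι, ∀ p ∈ D, 0 ≤ φifc p → Mm i ≤ φm i p)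
    (hMp : ∀ i : ι, ∀ p ∈ D, φifc p ≤ 0 → Mp i ≤ φp i p) :
    ∀ p ∈ D,
      ((φifc p ≤ 0 ∧ ∀ i : ι, 0 ≤ φm i p) ∨
        (0 ≤ φifc p ∧ ∀ i : ι, 0 ≤ φp i p)) →
      ∃ t : ℝ, (t = 0 ∨ t = 1) ∧
        φifc p ≤ Mtp * t ∧
        Mtm * (1 - t) ≤ φifc p ∧
        (∀ i : ι, Mm i * t ≤ φm i p) ∧
        (∀ i : ι, Mp i * (1 - t) ≤ φp i p) := by
  intro p hp h
  rcases h with ⟨h0, hm⟩ | ⟨h0, hpp⟩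
  · refine ⟨0, Or.inl rfl, by simpa using h0, by simpa using hMtm p hp, ?_, ?_⟩
    · intro i; simpa using hm i
    · intro i; simpa using hMp i p hp h0
  · refine ⟨1, Or.inr rfl, by simpa using hMtp p hp, by simpa using h0, ?_, ?_⟩
    · intro i; simpa using hMm i p hp h0
    · intro i; simpa using hpp i
end

section
/- Let g : ℝⁿ → ℝ be affine, let y₁⁻, …, y_k⁻ and y₁⁺, …, y_k⁺ : ℝⁿ → ℝ be affine functions with y_i⁻ = y_i⁺ on {g = 0} for each i, and let h(x) = max_i y_i⁻(x) if g(x) ≤ 0 and h(x) = max_i y_i⁺(x) otherwise. Fix a box X ⊆ ℝⁿ and an interval [y_min, y_max], and set D = X × [y_min, y_max] ⊆ ℝ^{n+1}. Define φ_ifc(x, y) = g(x), φ_i⁻(x, y) = y − y_i⁻(x), φ_i⁺(x, y) = y − y_i⁺(x), and take the big-M constants M_t⁺ = max_{p∈D} φ_ifc(p), M_t⁻ = min_{p∈D} φ_ifc(p), M_i⁻ = min{φ_i⁻(p) : p ∈ D, φ_ifc(p) ≥ 0}, M_i⁺ = min{φ_i⁺(p) : p ∈ D, φ_ifc(p) ≤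 0}. Then for every x ∈ X with y_min ≤ h(x) ≤ y_max, the set {y ∈ [y_min, y_max] : ∃ t ∈ {0,1} such that constraints (7)–(10) hold at p = (x, y)} equals the interval [h(x), y_max]; in particular its minimum is h(x). -/
/-- The MILP representation (7)–(10) of a PwCA with a single binary toggle
exactly represents the epigraph of the PwCA function `h` over the bounded
domain `D = X × [ymin, ymax]`: for every `x ∈ X` with `ymin ≤ h x ≤ ymax`,
the set of feasible `y ∈ [ymin, ymax]` is exactly `[h x, ymax]`. -/
theorem pwca_milp_epigraph {n : ℕ} {ι : Type*} [Fintype ι] [Nonempty ι]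
    (g : (Fin n → ℝ) →ᵃ[ℝ] ℝ)
    (ym yp : ι → ((Fin n → ℝ) →ᵃ[ℝ] ℝ))
    (hagree : ∀ i : ι, ∀ x : Fin n → ℝ, g x = 0 → ym i x = yp i x)
    (h : (Fin n → ℝ) → ℝ)
    (hh : ∀ x : Fin n → ℝ, h x =
      if g x ≤ 0 then Finset.univ.sup' Finset.univ_nonempty (fun i : ι => ym i x)
      else Finset.univ.sup' Finset.univ_nonempty (fun i : ι => yp i x))
    (lo hi : Fin n → ℝ) (ymin ymax : ℝ)
    (X : Set (Fin n → ℝ)) (hX : X = Set.Icc lo hi)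
    (D : Set ((Fin n → ℝ) × ℝ)) (hD : D = X ×ˢ Set.Icc ymin ymax)
    (φifc : (Fin n → ℝ) × ℝ → ℝ) (hφifc : ∀ p, φifc p = g p.1)
    (φm φp : ι → (Fin n → ℝ) × ℝ → ℝ)
    (hφm : ∀ i p, φm i p = p.2 - ym i p.1)
    (hφp : ∀ i p, φp i p = p.2 - yp i p.1)
    (Mtp Mtm : ℝ) (Mm Mp : ι → ℝ)
    (hMtp : Mtp = sSup (φifc '' D))
    (hMtm : Mtm = sInf (φifc '' D))
    (hMm : ∀ i, Mm i = sInf (φm i '' {p ∈ D | 0 ≤ φifc p}))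
    (hMp : ∀ i, Mp i = sInf (φp i '' {p ∈ D | φifc p ≤ 0})) :
    ∀ x ∈ X, ymin ≤ h x → h x ≤ ymax →
      {y ∈ Set.Icc ymin ymax | ∃ t : ℝ, (t = 0 ∨ t = 1) ∧
          φifc (x, y) ≤ Mtp * t ∧
          Mtm * (1 - t) ≤ φifc (x, y) ∧
          (∀ i : ι, Mm i * t ≤ φm i (x, y)) ∧
          (∀ i : ι, Mp i * (1 - t) ≤ φp i (x, y))} =
        Set.Icc (h x) ymax := by
  intro x hx hy1 hy2
  subst hX hD hMtp hMtm
  have hφifc' : φifc = fun p => g p.1 := funext hφifc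
  have hφm' : φm = fun i p => p.2 - ym i p.1 := funext fun i => funext (hφm i)
  have hφp' : φp = fun i p => p.2 - yp i p.1 := funext fun i => funext (hφp i)
  subst hφifc' hφm' hφp'
  have hDc : IsCompact (Set.Icc lo hi ×ˢ Set.Icc ymin ymax) :=
    isCompact_Icc.prod isCompact_Icc
  have cg : Continuous fun p : (Fin n → ℝ) × ℝ => g p.1 :=
    g.continuous_of_finiteDimensional.comp continuous_fst
  have cm : ∀ i : ι, Continuous fun p : (Fin n → ℝ) × ℝ => p.2 - ym i p.1 :=
    fun i => continuous_snd.sub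
      ((ym i).continuous_of_finiteDimensional.comp continuous_fst)
  have cp : ∀ i : ι, Continuous fun p : (Fin n → ℝ) × ℝ => p.2 - yp i p.1 :=
    fun i => continuous_snd.sub
      ((yp i).continuous_of_finiteDimensional.comp continuous_fst)
  ext y
  simp only [Set.mem_setOf_eq, Set.mem_Icc]
  constructor
  · rintro ⟨⟨hy1', hy2'⟩, t, (rfl | rfl), c1, c2, c3, c4⟩
    · refine ⟨?_, hy2'⟩
      have hg : g x ≤ 0 := by simpa using c1
      rw [hh x, if_pos hg]
      apply Finset.sup'_le
      intro i _
      have := c3 i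
      simp only [mul_zero] at this
      linarith
    · refine ⟨?_, hy2'⟩
      have hg : 0 ≤ g x := by simpa using c2
      rw [hh x]
      split_ifs with hle
      · have hg0 : g x = 0 := le_antisymm hle hg
        apply Finset.sup'_le
        intro i _
        have := c4 i
        simp only [sub_self, mul_zero] at this
        rw [hagree i x hg0]
        linarith
      · apply Finset.sup'_le
        intro i _
        have := c4 i
        simp only [sub_self, mul_zero] at this
        linarith
  · rintro ⟨hyl, hyu⟩
    have hy1'' : ymin ≤ y := hy1.trans hyl
    have pxy : (x, y) ∈ Set.Icc lo hi ×ˢ Set.Icc ymin ymax := ⟨hx, hy1'', hyu⟩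
    refine ⟨⟨hy1'', hyu⟩, ?_⟩
    by_cases hg : g x ≤ 0
    · refine ⟨0, Or.inl rfl, by simpa using hg, ?_, ?_, ?_⟩
      · rw [sub_zero, mul_one]
        exact csInf_le (hDc.image cg).bddBelow ⟨(x, y), pxy, rfl⟩
      · intro i
        rw [mul_zero]
        have : ym i x ≤ h x := by
          rw [hh x, if_pos hg]
          exact Finset.le_sup' (fun j : ι => ym j x) (Finset.mem_univ i)
        linarith
      · intro i
        rw [sub_zero, mul_one, hMp i]
        refine csInf_le ?_ ⟨(x, y), ⟨pxy, hg⟩, rfl⟩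
        exact ((hDc.image (cp i)).bddBelow).mono
          (Set.image_mono (Set.sep_subset _ _))
    · push_neg at hg
      refine ⟨1, Or.inr rfl, ?_, ?_, ?_, ?_⟩
      · rw [mul_one]
        exact le_csSup (hDc.image cg).bddAbove ⟨(x, y), pxy, rfl⟩
      · simpa using hg.le
      · intro i
        rw [mul_one, hMm i]
        refine csInf_le ?_ ⟨(x, y), ⟨pxy, hg.le⟩, rfl⟩
        exact ((hDc.image (cm i)).bddBelow).mono
          (Set.image_mono (Set.sep_subset _ _))
      · intro i
        simp only [sub_self, mul_zero]
        have : yp i x ≤ h x := by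
          rw [hh x, if_neg (not_le.mpr hg)]
          exact Finset.le_sup' (fun j : ι => yp j x) (Finset.mem_univ i)
        linarith
end
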